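/- Let S be a preordered abelian monoid and let y ∈ S. Then I(y) := {z ∈ S : y + z ≤ y} is an ideal of S contained in the ideal ⟨y⟩ generated by y. If moreover y ≠ 0, then: (1) y is infinite if and only if I(y) ≠ {0}; (2) y is properly infinite if and only if I(y) = ⟨y⟩ and I(y) ≠ {0}; (3) for all x ∈ S and all a, a' ∈ I(y), if x + y + a ≤ y + a' then x ∈ I(y) (this expresses that the image of y in the quotient S/I(y) is finite). -/
import Mathlib


/-- Lemma 2.? : `I(y) := {z | y + z ≤ y}` is an ideal contained in `⟨y⟩`, and for `y ≠ 0`: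
`y` is infinite iff `I(y) ≠ {0}`; `y` is properly infinite iff `I(y) = ⟨y⟩ ≠ {0}`;
and the image of `y` in `S/I(y)` is finite. -/
theorem stmt0 {S : Type*} [AddCommMonoid S] [Preorder S]
    (hzero : ∀ x : S, 0 ≤ x)
    (hadd : ∀ x y z : S, x ≤ y → x + z ≤ y + z)
    (y : S) :
    ((0 : S) ∈ {z : S | y + z ≤ y} ∧
     (∀ a b : S, a ∈ {z : S | y + z ≤ y} → b ∈ {z : S | y + z ≤ y} →
        a + b ∈ {z : S | y + z ≤ y}) ∧
     (∀ a b : S, a ≤ b → b ∈ {z : S | y + z ≤ y} → a ∈ {z : S | y + z ≤ y}) ∧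
     {z : S | y + z ≤ y} ⊆ {x : S | ∃ n : ℕ, x ≤ n • y}) ∧
    (y ≠ 0 →
      (((∃ z : S, z ≠ 0 ∧ y + z ≤ y) ↔ {z : S | y + z ≤ y} ≠ {0}) ∧
       ((y + y ≤ y) ↔
          ({z : S | y + z ≤ y} = {x : S | ∃ n : ℕ, x ≤ n • y} ∧
           {z : S | y + z ≤ y} ≠ {0})) ∧
       (∀ x a a' : S, a ∈ {z : S | y + z ≤ y} → a' ∈ {z : S | y + z ≤ y} →
          x + y + a ≤ y + a' → x ∈ {z : S | y + z ≤ y}))) := by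
  have hclosed : ∀ a b : S, y + a ≤ y → y + b ≤ y → y + (a + b) ≤ y := by
    intro a b ha hb
    have h1 : y + (a + b) = (y + a) + b := by rw [add_assoc]
    rw [h1]
    exact le_trans (hadd _ _ b ha) hb
  have hdown : ∀ a b : S, a ≤ b → y + b ≤ y → y + a ≤ y := by
    intro a b hab hb
    have : y + a ≤ y + b := by
      have := hadd a b y hab
      simpa [add_comm] using this
    exact le_trans this hb
  refine ⟨⟨by simp, hclosed, hdown, ?_⟩, ?_⟩
  · intro z hz
    refine ⟨1, ?_⟩
    have h0 : z ≤ y + z := by simpa using hadd 0 y z (hzero y)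
    simpa using le_trans h0 hz
  · intro hy
    refine ⟨?_, ?_, ?_⟩
    · constructor
      · rintro ⟨z, hz0, hz⟩ heq
        have : z ∈ ({0} : Set S) := heq ▸ hz
        exact hz0 this
      · intro hne
        by_contra h
        push_neg at h
        apply hne
        ext z
        simp only [Set.mem_setOf_eq, Set.mem_singleton_iff]
        constructor
        · intro hz
          by_contra hz0
          exact h z hz0 hz
        · rintro rfl; simp
    · constructor
      · intro hpi
        refine ⟨?_, ?_⟩
        · apply Set.Subset.antisymm
          · intro z hz
            refine ⟨1, ?_⟩
            have h0 : z ≤ y + z := by simpa using hadd 0 y z (hzero y)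
            simpa using le_trans h0 hz
          · rintro x ⟨n, hn⟩
            have hny : ∀ m : ℕ, y + m • y ≤ y := by
              intro m
              induction m with
              | zero => simp
              | succ k ih =>
                have : (k + 1) • y = k • y + y := succ_nsmul y k
                rw [this]
                exact hclosed _ _ ih hpi
            exact hdown x (n • y) hn (hny n)
        · intro heq
          have : y ∈ ({0} : Set S) := heq ▸ (by simpa using hpi)
          exact hy this
      · rintro ⟨heq, -⟩
        have : y ∈ {x : S | ∃ n : ℕ, x ≤ n • y} := ⟨1, by simp⟩
        have := heq ▸ this
        simpa using this
    · intro x a a' ha ha' hle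
      have h1 : x + y ≤ x + y + a := by
        have := hadd 0 a (x + y) (hzero a)
        simpa [add_comm] using this
      have h2 : y + a' ≤ y := ha'
      have : x + y ≤ y := le_trans h1 (le_trans hle h2)
      simpa [add_comm] using this
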